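/- Let ℓ ≥ 3 be an integer and let G be the cycle graph on Fin N (N = 2ℓ+1). The face F_0 = { f ∈ STAB(G) : f(0) = 0 and Σ_{i ∈ Fin N} f(i) = ℓ } of the stable set polytope has dimension exactly ℓ, i.e., the direction of the affine span of F_0 in ℝ^{Fin N} has dimension ℓ. (Consequently each of the 2ℓ+1 minimal primes of the trace of the canonical module of the Ehrhart ring has coheight ℓ+1.) -/

import Mathlib

/-- The stable set polytope of the cycle graph on `Fin N` (edges `{i, i+1 mod N}`):
the convex hull of characteristic vectors of stable sets. -/
def stabPolytope (N : ℕ) [NeZero N] : Set (Fin N → ℝ) :=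
  convexHull ℝ
    { f | ∃ S : Finset (Fin N), (∀ i ∈ S, i + 1 ∉ S) ∧
          f = fun i => if i ∈ S then (1 : ℝ) else 0 }

namespace StabAux

open Finset

/-- difference basis vectors -/
def wvec (ℓ : ℕ) (k : Fin ℓ) : Fin (2*ℓ+1) → ℝ :=
  fun i => if i.val = 2*k.val+1 then 1 else if i.val = 2*k.val+2 then -1 else 0

lemma sumw_apply (ℓ : ℕ) (c : Fin ℓ → ℝ) (i : Fin (2*ℓ+1)) :
    (∑ k, c k • wvec ℓ k) i = ∑ k, c k * wvec ℓ k i := by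
  simp [Finset.sum_apply]

lemma sumw_zero (ℓ : ℕ) (c : Fin ℓ → ℝ) :
    (∑ k, c k • wvec ℓ k) ⟨0, by omega⟩ = 0 := by
  rw [sumw_apply]
  exact Finset.sum_eq_zero fun k _ => by
    simp only [wvec, Fin.val_mk]
    rw [if_neg (by omega), if_neg (by omega), mul_zero]

lemma sumw_odd (ℓ : ℕ) (c : Fin ℓ → ℝ) (m : ℕ) (hm : m < ℓ) :
    (∑ k, c k • wvec ℓ k) ⟨2*m+1, by omega⟩ = c ⟨m, hm⟩ := by
  rw [sumw_apply]
  rw [Finset.sum_eq_single (⟨m, hm⟩ : Fin ℓ)]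
  · simp [wvec]
  · intro k _ hk
    have hkm : k.val ≠ m := fun h => hk (Fin.ext h)
    simp only [wvec, Fin.val_mk]
    rw [if_neg (by omega), if_neg (by omega), mul_zero]
  · intro h; exact absurd (Finset.mem_univ _) h

lemma sumw_even (ℓ : ℕ) (c : Fin ℓ → ℝ) (m : ℕ) (hm : m < ℓ) :
    (∑ k, c k • wvec ℓ k) ⟨2*m+2, by omega⟩ = -c ⟨m, hm⟩ := by
  rw [sumw_apply]
  rw [Finset.sum_eq_single (⟨m, hm⟩ : Fin ℓ)]
  · simp only [wvec, Fin.val_mk]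
    rw [if_neg (by omega)]
    norm_num
  · intro k _ hk
    have hkm : k.val ≠ m := fun h => hk (Fin.ext h)
    simp only [wvec, Fin.val_mk]
    rw [if_neg (by omega), if_neg (by omega), mul_zero]
  · intro h; exact absurd (Finset.mem_univ _) h

lemma wvec_li (ℓ : ℕ) : LinearIndependent ℝ (wvec ℓ) := by
  rw [Fintype.linearIndependent_iff]
  intro c hc k
  have h := congrFun hc ⟨2*k.val+1, by omega⟩
  rw [sumw_odd ℓ c k.val k.isLt] at h
  simpa using h

lemma mem_span_of (ℓ : ℕ) (g : Fin (2*ℓ+1) → ℝ) (h0 : g ⟨0, by omega⟩ = 0)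
    (hp : ∀ m : ℕ, ∀ hm : m < ℓ, g ⟨2*m+1, by omega⟩ + g ⟨2*m+2, by omega⟩ = 0) :
    g ∈ Submodule.span ℝ (Set.range (wvec ℓ)) := by
  have hrep : g = ∑ k : Fin ℓ, (fun k : Fin ℓ => g ⟨2*k.val+1, by omega⟩) k • wvec ℓ k := by
    funext i
    have hi := i.isLt
    rcases Nat.eq_zero_or_pos i.val with h | h
    · have hieq : i = ⟨0, by omega⟩ := Fin.ext h
      rw [hieq, sumw_zero, h0]
    · obtain ⟨m, hm, h2⟩ : ∃ m, m < ℓ ∧ (i.val = 2*m+1 ∨ i.val = 2*m+2) :=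
        ⟨(i.val - 1) / 2, by omega, by omega⟩
      rcases h2 with h2 | h2
      · have hieq : i = ⟨2*m+1, by omega⟩ := Fin.ext h2
        rw [hieq, sumw_odd ℓ _ m hm]
      · have hieq : i = ⟨2*m+2, by omega⟩ := Fin.ext h2
        rw [hieq, sumw_even ℓ _ m hm]
        have := hp m hm
        linarith
  rw [hrep]
  exact Submodule.sum_mem _ fun k _ =>
    Submodule.smul_mem _ _ (Submodule.subset_span ⟨k, rfl⟩)

/-- decomposition of a sum over `range (2ℓ+1)` -/
lemma nat_decomp (g : ℕ → ℝ) : ∀ ℓ : ℕ,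
    ∑ n ∈ Finset.range (2*ℓ+1), g n
      = g 0 + ∑ k ∈ Finset.range ℓ, (g (2*k+1) + g (2*k+2)) := by
  intro ℓ
  induction ℓ with
  | zero => simp
  | succ n ih =>
    have h1 : 2*(n+1)+1 = (2*n+1) + 1 + 1 := by ring
    rw [h1, Finset.sum_range_succ, Finset.sum_range_succ, ih, Finset.sum_range_succ]
    ring

lemma sum_decomp (ℓ : ℕ) (f : Fin (2*ℓ+1) → ℝ) :
    ∑ i, f i = f ⟨0, by omega⟩
      + ∑ k : Fin ℓ, (f ⟨2*k.val+1, by omega⟩ + f ⟨2*k.val+2, by omega⟩) := by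
  have key := nat_decomp (fun n => if h : n < 2*ℓ+1 then f ⟨n, h⟩ else 0) ℓ
  have h1 : ∑ i, f i
      = ∑ n ∈ Finset.range (2*ℓ+1), (fun n => if h : n < 2*ℓ+1 then f ⟨n, h⟩ else 0) n := by
    rw [← Fin.sum_univ_eq_sum_range]
    exact Finset.sum_congr rfl fun i _ => by simp [i.isLt]
  rw [h1, key]
  congr 1
  · rw [← Fin.sum_univ_eq_sum_range
      (fun k => (fun n => if h : n < 2*ℓ+1 then f ⟨n, h⟩ else 0) (2*k+1)
        + (fun n => if h : n < 2*ℓ+1 then f ⟨n, h⟩ else 0) (2*k+2)) ℓ]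
    refine Finset.sum_congr rfl fun k _ => ?_
    have hk := k.isLt
    have e1 : 2*(k:ℕ)+1 < 2*ℓ+1 := by omega
    have e2 : 2*(k:ℕ)+2 < 2*ℓ+1 := by omega
    simp [e1, e2]

lemma pair_le (ℓ : ℕ) (f : Fin (2*ℓ+1) → ℝ) (hf : f ∈ stabPolytope (2*ℓ+1))
    (m : ℕ) (hm : m < ℓ) :
    f ⟨2*m+1, by omega⟩ + f ⟨2*m+2, by omega⟩ ≤ 1 := by
  set a : Fin (2*ℓ+1) := ⟨2*m+1, by omega⟩ with ha
  set b : Fin (2*ℓ+1) := ⟨2*m+2, by omega⟩ with hb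
  have hab : a + 1 = b := by
    apply Fin.ext
    rw [Fin.val_add, ha, hb]
    have h1 : (1 : Fin (2*ℓ+1)).val = 1 := by
      rw [Fin.val_one']
      exact Nat.mod_eq_of_lt (by omega)
    rw [h1, Fin.val_mk, Fin.val_mk]
    exact Nat.mod_eq_of_lt (by omega)
  have hlin : IsLinearMap ℝ fun g : Fin (2*ℓ+1) → ℝ => g a + g b := by
    constructor
    · intro x y; simp only [Pi.add_apply]; ring
    · intro c x; simp only [Pi.smul_apply, smul_eq_mul]; ring
  have hconv : Convex ℝ {g : Fin (2*ℓ+1) → ℝ | g a + g b ≤ 1} :=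
    convex_halfSpace_le hlin 1
  refine convexHull_min ?_ hconv hf
  rintro g ⟨S, hS, rfl⟩
  simp only [Set.mem_setOf_eq]
  by_cases haS : a ∈ S
  · have hbS : b ∉ S := hab ▸ hS a haS
    simp [haS, hbS]
  · by_cases hbS : b ∈ S <;> simp [haS, hbS]

lemma pair_eq (ℓ : ℕ) (f : Fin (2*ℓ+1) → ℝ) (hf : f ∈ stabPolytope (2*ℓ+1))
    (h0 : f ⟨0, by omega⟩ = 0) (hsum : ∑ i, f i = (ℓ : ℝ))
    (m : ℕ) (hm : m < ℓ) :
    f ⟨2*m+1, by omega⟩ + f ⟨2*m+2, by omega⟩ = 1 := by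
  have hd := sum_decomp ℓ f
  rw [hsum, h0, zero_add] at hd
  have hone : ∑ _k : Fin ℓ, (1 : ℝ) = (ℓ : ℝ) := by simp
  have hall := (Finset.sum_eq_sum_iff_of_le
    (fun k _ => pair_le ℓ f hf k.val k.isLt)).mp (hd.symm.trans hone.symm)
  exact hall ⟨m, hm⟩ (Finset.mem_univ _)

/-- vertices of the face: stable sets of size ℓ avoiding 0 -/
def Sset (ℓ j : ℕ) : Finset (Fin (2*ℓ+1)) :=
  Finset.univ.filter (fun i =>
    (i.val % 2 = 1 ∧ i.val < 2*j) ∨ (i.val % 2 = 0 ∧ 2*j+2 ≤ i.val))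

lemma mem_Sset (ℓ j : ℕ) (i : Fin (2*ℓ+1)) :
    i ∈ Sset ℓ j ↔ (i.val % 2 = 1 ∧ i.val < 2*j) ∨ (i.val % 2 = 0 ∧ 2*j+2 ≤ i.val) := by
  simp [Sset]

lemma Sset_stable (ℓ j : ℕ) (hℓ : 1 ≤ ℓ) (hj : j ≤ ℓ) :
    ∀ i ∈ Sset ℓ j, i + 1 ∉ Sset ℓ j := by
  intro i hi hcon
  rw [mem_Sset] at hi hcon
  have hlt := i.isLt
  have hv1 : (1 : Fin (2*ℓ+1)).val = 1 := by
    rw [Fin.val_one']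
    exact Nat.mod_eq_of_lt (by omega)
  have hadd : (i + 1).val = (i.val + 1) % (2*ℓ+1) := by rw [Fin.val_add, hv1]
  rcases Nat.lt_or_ge i.val (2*ℓ) with h | h
  · have hmod : (i.val + 1) % (2*ℓ+1) = i.val + 1 := Nat.mod_eq_of_lt (by omega)
    rw [hadd, hmod] at hcon
    rcases hi with hi | hi <;> rcases hcon with hc | hc <;> omega
  · have hie : i.val = 2*ℓ := by omega
    have h0 : (i.val + 1) % (2*ℓ+1) = 0 := by rw [hie]; simp
    rw [hadd, h0] at hcon
    rcases hi with hi' | hi' <;> rcases hcon with hc | hc <;> omega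

def vert (ℓ j : ℕ) : Fin (2*ℓ+1) → ℝ := fun i => if i ∈ Sset ℓ j then 1 else 0

lemma vert_mem (ℓ j : ℕ) (hℓ : 1 ≤ ℓ) (hj : j ≤ ℓ) :
    vert ℓ j ∈ stabPolytope (2*ℓ+1) :=
  subset_convexHull ℝ _ ⟨Sset ℓ j, Sset_stable ℓ j hℓ hj, rfl⟩

lemma vert_zero (ℓ j : ℕ) : vert ℓ j ⟨0, by omega⟩ = 0 := by
  have h : ¬ ((⟨0, by omega⟩ : Fin (2*ℓ+1)) ∈ Sset ℓ j) := by
    rw [mem_Sset, Fin.val_mk]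
    omega
  simp only [vert]
  rw [if_neg h]

lemma vert_odd (ℓ j m : ℕ) (hm : m < ℓ) :
    vert ℓ j ⟨2*m+1, by omega⟩ = if m < j then 1 else 0 := by
  have h1 : ((⟨2*m+1, by omega⟩ : Fin (2*ℓ+1)) ∈ Sset ℓ j) ↔ m < j := by
    rw [mem_Sset, Fin.val_mk]; omega
  simp only [vert]
  by_cases h : m < j
  · rw [if_pos (h1.mpr h), if_pos h]
  · rw [if_neg (fun hc => h (h1.mp hc)), if_neg h]

lemma vert_even (ℓ j m : ℕ) (hm : m < ℓ) :
    vert ℓ j ⟨2*m+2, by omega⟩ = if j ≤ m then 1 else 0 := by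
  have h2 : ((⟨2*m+2, by omega⟩ : Fin (2*ℓ+1)) ∈ Sset ℓ j) ↔ j ≤ m := by
    rw [mem_Sset, Fin.val_mk]; omega
  simp only [vert]
  by_cases h : j ≤ m
  · rw [if_pos (h2.mpr h), if_pos h]
  · rw [if_neg (fun hc => h (h2.mp hc)), if_neg h]

lemma vert_pair (ℓ j : ℕ) (m : ℕ) (hm : m < ℓ) :
    vert ℓ j ⟨2*m+1, by omega⟩ + vert ℓ j ⟨2*m+2, by omega⟩ = 1 := by
  rw [vert_odd ℓ j m hm, vert_even ℓ j m hm]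
  rcases Nat.lt_or_ge m j with h | h
  · rw [if_pos h, if_neg (by omega)]; norm_num
  · rw [if_neg (by omega), if_pos h]; norm_num

lemma vert_sum (ℓ j : ℕ) : ∑ i, vert ℓ j i = (ℓ : ℝ) := by
  rw [sum_decomp, vert_zero, zero_add]
  rw [Finset.sum_congr rfl (fun k _ => vert_pair ℓ j k.val k.isLt)]
  simp

lemma vert_diff (ℓ j : ℕ) (hj : j < ℓ) :
    vert ℓ (j+1) - vert ℓ j = wvec ℓ ⟨j, hj⟩ := by
  funext i
  have hlt := i.isLt
  rw [Pi.sub_apply]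
  rcases Nat.eq_zero_or_pos i.val with h | h
  · have hieq : i = ⟨0, by omega⟩ := Fin.ext h
    rw [hieq, vert_zero, vert_zero]
    simp only [wvec, Fin.val_mk]
    rw [if_neg (by omega), if_neg (by omega)]
    norm_num
  · obtain ⟨m, hm, h2⟩ : ∃ m, m < ℓ ∧ (i.val = 2*m+1 ∨ i.val = 2*m+2) :=
      ⟨(i.val - 1) / 2, by omega, by omega⟩
    rcases h2 with h2 | h2
    · have hieq : i = ⟨2*m+1, by omega⟩ := Fin.ext h2
      rw [hieq, vert_odd ℓ (j+1) m hm, vert_odd ℓ j m hm]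
      simp only [wvec, Fin.val_mk]
      split_ifs <;> first | (exfalso; omega) | norm_num
    · have hieq : i = ⟨2*m+2, by omega⟩ := Fin.ext h2
      rw [hieq, vert_even ℓ (j+1) m hm, vert_even ℓ j m hm]
      simp only [wvec, Fin.val_mk]
      split_ifs <;> first | (exfalso; omega) | norm_num

end StabAux

theorem stmt_4 (ℓ : ℕ) (hℓ : 3 ≤ ℓ) :
    Module.finrank ℝ
      (vectorSpan ℝ
        { f ∈ stabPolytope (2 * ℓ + 1) | f 0 = 0 ∧ ∑ i, f i = (ℓ : ℝ) }) = ℓ := by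
  classical
  set F0 : Set (Fin (2*ℓ+1) → ℝ) :=
    { f ∈ stabPolytope (2 * ℓ + 1) | f 0 = 0 ∧ ∑ i, f i = (ℓ : ℝ) } with hF0
  have hzero : (0 : Fin (2*ℓ+1)) = ⟨0, by omega⟩ := by
    apply Fin.ext; simp
  have key : vectorSpan ℝ F0 = Submodule.span ℝ (Set.range (StabAux.wvec ℓ)) := by
    apply le_antisymm
    · rw [vectorSpan_def]
      rw [Submodule.span_le]
      intro x hx
      rw [Set.mem_vsub] at hx
      obtain ⟨f, hf, g, hg, rfl⟩ := hx
      obtain ⟨hf1, hf2, hf3⟩ := hf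
      obtain ⟨hg1, hg2, hg3⟩ := hg
      rw [vsub_eq_sub]
      apply StabAux.mem_span_of
      · simp only [Pi.sub_apply]
        rw [← hzero, hf2, hg2, sub_zero]
      · intro m hm
        have hfp := StabAux.pair_eq ℓ f hf1 (by rw [← hzero]; exact hf2) hf3 m hm
        have hgp := StabAux.pair_eq ℓ g hg1 (by rw [← hzero]; exact hg2) hg3 m hm
        simp only [Pi.sub_apply]
        linarith
    · rw [Submodule.span_le]
      rintro x ⟨k, rfl⟩
      rw [← StabAux.vert_diff ℓ k.val k.isLt, ← vsub_eq_sub]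
      apply vsub_mem_vectorSpan
      · refine ⟨StabAux.vert_mem ℓ (k.val+1) (by omega) (by omega), ?_, ?_⟩
        · rw [hzero]; exact StabAux.vert_zero ℓ (k.val+1)
        · exact StabAux.vert_sum ℓ (k.val+1)
      · refine ⟨StabAux.vert_mem ℓ k.val (by omega) (by omega), ?_, ?_⟩
        · rw [hzero]; exact StabAux.vert_zero ℓ k.val
        · exact StabAux.vert_sum ℓ k.val
  rw [key, finrank_span_eq_card (StabAux.wvec_li ℓ)]
  simp
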